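/- A transitive permutation 2-group G ≤ S_{2d} contains a transposition if and only if G is isomorphic as a permutation group to the wreath product C₂ ≀ H for some transitive permutation group H of degree d. -/

import Mathlib

private lemma zmod2_add_self (a : ZMod 2) : a + a = 0 := by
  fin_cases a <;> decide

/-- The element `x ⋊ s` of the wreath product `C₂ ≀ H`, realized as a permutation of
`ZMod 2 × B` (the set `{1,2} × B`): blocks are permuted by `s` and then the two points of the
block over `b` are swapped iff the coordinate `x b` is nonzero. -/
def wreathPerm {B : Type} (x : B → ZMod 2) (s : Equiv.Perm B) : Equiv.Perm (ZMod 2 × B) where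
  toFun p := (p.1 + x (s p.2), s p.2)
  invFun p := (p.1 + x p.2, s.symm p.2)
  left_inv p := by
    obtain ⟨i, b⟩ := p
    simp [add_assoc, zmod2_add_self]
  right_inv p := by
    obtain ⟨i, b⟩ := p
    simp [add_assoc, zmod2_add_self]

lemma wreathPerm_apply {B : Type} (x : B → ZMod 2) (s : Equiv.Perm B) (p : ZMod 2 × B) :
    wreathPerm x s p = (p.1 + x (s p.2), s p.2) := rfl

lemma wreathPerm_one {B : Type} : wreathPerm (fun _ : B => (0 : ZMod 2)) 1 = 1 := by
  apply Equiv.ext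
  intro p
  simp [wreathPerm_apply]

lemma wreathPerm_mul {B : Type} (x y : B → ZMod 2) (s t : Equiv.Perm B) :
    wreathPerm x s * wreathPerm y t
      = wreathPerm (fun c => x c + y (s⁻¹ c)) (s * t) := by
  apply Equiv.ext
  intro p
  simp [wreathPerm_apply, Equiv.Perm.mul_apply]
  ring

lemma wreathPerm_inv {B : Type} (x : B → ZMod 2) (s : Equiv.Perm B) :
    (wreathPerm x s)⁻¹ = wreathPerm (fun c => x (s c)) s⁻¹ := by
  apply inv_eq_of_mul_eq_one_right
  rw [wreathPerm_mul]
  have h1 : (fun c => x c + x (s (s⁻¹ c))) = fun _ : B => (0 : ZMod 2) := by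
    funext c
    simp [zmod2_add_self]
  rw [h1]
  rw [mul_inv_cancel]
  exact wreathPerm_one

/-! ### Auxiliary material -/

/-- `permCongr` as a monoid hom. -/
def permCongrHom {X Y : Type} (e : X ≃ Y) : Equiv.Perm X →* Equiv.Perm Y where
  toFun := e.permCongr
  map_one' := by ext y; simp
  map_mul' g h := by ext y; simp [Equiv.Perm.mul_apply]

lemma zmod2_cases (z : ZMod 2) : z = 0 ∨ z = 1 := by fin_cases z; exacts [Or.inl rfl, Or.inr rfl]

lemma swap_eq_of_pgroup {X : Type} [DecidableEq X] {G : Subgroup (Equiv.Perm X)}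
    (hG2 : IsPGroup 2 G) {a b c : X} (hb : b ≠ a) (hc : c ≠ a)
    (hab : Equiv.swap a b ∈ G) (hac : Equiv.swap a c ∈ G) : b = c := by
  by_contra hbc
  have hbc' : c ≠ b := fun h => hbc h.symm
  set g : Equiv.Perm X := Equiv.swap a b * Equiv.swap a c with hg
  have hgG : g ∈ G := mul_mem hab hac
  have hga : g a = c := by
    rw [hg]; rw [Equiv.Perm.mul_apply, Equiv.swap_apply_left,
      Equiv.swap_apply_of_ne_of_ne hc hbc']
  have hgc : g c = b := by
    rw [hg]; rw [Equiv.Perm.mul_apply, Equiv.swap_apply_right, Equiv.swap_apply_left]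
  have hgb : g b = a := by
    rw [hg]; rw [Equiv.Perm.mul_apply,
      Equiv.swap_apply_of_ne_of_ne hb (fun h => hbc h), Equiv.swap_apply_right]
  have hgo : ∀ y, y ≠ a → y ≠ b → y ≠ c → g y = y := by
    intro y hya hyb hyc
    rw [hg]; rw [Equiv.Perm.mul_apply, Equiv.swap_apply_of_ne_of_ne hya hyc,
      Equiv.swap_apply_of_ne_of_ne hya hyb]
  have h3 : g ^ 3 = 1 := by
    ext y
    rw [show (3:ℕ) = 2+1 by rfl, pow_succ, pow_succ, pow_one, Equiv.Perm.mul_apply,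
      Equiv.Perm.mul_apply, Equiv.Perm.one_apply]
    rcases eq_or_ne y a with rfl | hya
    · rw [hga, hgc, hgb]
    rcases eq_or_ne y b with rfl | hyb
    · rw [hgb, hga, hgc]
    rcases eq_or_ne y c with rfl | hyc
    · rw [hgc, hgb, hga]
    · rw [hgo y hya hyb hyc, hgo y hya hyb hyc, hgo y hya hyb hyc]
  obtain ⟨k, hk⟩ := hG2 ⟨g, hgG⟩
  have hk' : g ^ (2 ^ k) = 1 := by
    have := congrArg (Subtype.val) hk
    simpa using this
  have hdvd3 : orderOf g ∣ 3 := orderOf_dvd_of_pow_eq_one h3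
  have hdvd2 : orderOf g ∣ 2 ^ k := orderOf_dvd_of_pow_eq_one hk'
  have hcop : Nat.Coprime 3 (2 ^ k) := Nat.Coprime.pow_right _ (by decide)
  have h1 : orderOf g ∣ 1 := hcop ▸ Nat.dvd_gcd hdvd3 hdvd2
  have hg1 : g = 1 := orderOf_eq_one_iff.mp (Nat.dvd_one.mp h1)
  rw [hg1] at hgc
  exact hbc ((Equiv.Perm.one_apply c) ▸ hgc).symm

/-- Pairing equivalence from an involution without fixed points and a set of representatives. -/
def pairEquiv {X : Type} [DecidableEq X] (σ : X → X) (R : Finset X)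
    (hσσ : ∀ a, σ (σ a) = a) (hRiff : ∀ a, σ a ∈ R ↔ a ∉ R) :
    X ≃ ZMod 2 × {x // x ∈ R} where
  toFun a := if h : a ∈ R then (0, ⟨a, h⟩) else (1, ⟨σ a, (hRiff a).mpr h⟩)
  invFun p := if p.1 = 0 then (p.2 : X) else σ (p.2 : X)
  left_inv a := by
    by_cases h : a ∈ R
    · simp [h]
    · simp [h, hσσ]
  right_inv p := by
    obtain ⟨i, b⟩ := p
    have hb : (b : X) ∈ R := b.2
    have hsb : σ (b : X) ∉ R := fun hh => ((hRiff b).mp hh) hb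
    rcases zmod2_cases i with rfl | rfl
    · simp [hb]
    · simp [hsb, hσσ]

lemma pairEquiv_flip {X : Type} [DecidableEq X] (σ : X → X) (R : Finset X)
    (hσσ : ∀ a, σ (σ a) = a) (hRiff : ∀ a, σ a ∈ R ↔ a ∉ R) (a : X) :
    pairEquiv σ R hσσ hRiff (σ a)
      = ((pairEquiv σ R hσσ hRiff a).1 + 1, (pairEquiv σ R hσσ hRiff a).2) := by
  have h11 : (1 : ZMod 2) + 1 = 0 := by decide
  by_cases h : a ∈ R
  · have hs : σ a ∉ R := fun hh => (hRiff a).mp hh h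
    simp [pairEquiv, h, hs, hσσ]
  · have hs : σ a ∈ R := (hRiff a).mpr h
    simp [pairEquiv, h, hs, h11]

/-- Any permutation of `ZMod 2 × B` commuting with the global flip is a `wreathPerm`. -/
lemma exists_wreath {B : Type} (g' : Equiv.Perm (ZMod 2 × B))
    (hc : ∀ p : ZMod 2 × B, g' (p.1 + 1, p.2) = ((g' p).1 + 1, (g' p).2)) :
    ∃ (x : B → ZMod 2) (s : Equiv.Perm B), g' = wreathPerm x s := by
  have hcinv : ∀ q : ZMod 2 × B, g'⁻¹ (q.1 + 1, q.2) = ((g'⁻¹ q).1 + 1, (g'⁻¹ q).2) := by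
    intro q
    have h1 := hc (g'⁻¹ q)
    rw [show ∀ q, g' (g'⁻¹ q) = q from fun q => g'.apply_symm_apply q] at h1
    calc g'⁻¹ (q.1 + 1, q.2) = g'⁻¹ (g' ((g'⁻¹ q).1 + 1, (g'⁻¹ q).2)) := by rw [h1]
    _ = ((g'⁻¹ q).1 + 1, (g'⁻¹ q).2) := g'.symm_apply_apply _
  have hsec : ∀ p : ZMod 2 × B, (g' p).2 = (g' (0, p.2)).2 := by
    intro p
    obtain ⟨i, b⟩ := p
    rcases zmod2_cases i with rfl | rfl
    · rfl
    · have h := hc (0, b)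
      simp only [zero_add] at h
      rw [h]
  have hsecinv : ∀ p : ZMod 2 × B, (g'⁻¹ p).2 = (g'⁻¹ (0, p.2)).2 := by
    intro p
    obtain ⟨i, b⟩ := p
    rcases zmod2_cases i with rfl | rfl
    · rfl
    · have h := hcinv (0, b)
      simp only [zero_add] at h
      rw [h]
  have hli : ∀ b : B, (g'⁻¹ ((0 : ZMod 2), (g' (0, b)).2)).2 = b := by
    intro b
    have := hsecinv (g' (0, b))
    rw [show ∀ q, g'⁻¹ (g' q) = q from fun q => g'.symm_apply_apply q] at this
    exact this.symm
  have hri : ∀ b : B, (g' ((0 : ZMod 2), (g'⁻¹ (0, b)).2)).2 = b := by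
    intro b
    have := hsec (g'⁻¹ (0, b))
    rw [show ∀ q, g' (g'⁻¹ q) = q from fun q => g'.apply_symm_apply q] at this
    exact this.symm
  refine ⟨fun c => (g' (0, (g'⁻¹ (0, c)).2)).1,
    ⟨fun b => (g' (0, b)).2, fun b => (g'⁻¹ (0, b)).2, hli, hri⟩, ?_⟩
  apply Equiv.ext
  intro p
  obtain ⟨i, b⟩ := p
  rw [wreathPerm_apply]
  have hsb : (⟨fun b => (g' (0, b)).2, fun b => (g'⁻¹ (0, b)).2, hli, hri⟩ :
      Equiv.Perm B) b = (g' (0, b)).2 := rfl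
  rw [hsb]
  rw [hli b]
  rcases zmod2_cases i with rfl | rfl
  · rw [zero_add]
  · have h := hc (0, b)
    simp only [zero_add] at h
    rw [h, add_comm]

/-- The base group of the wreath product is generated by the block swaps. -/
lemma base_mem {B : Type} [Fintype B] [DecidableEq B] (G' : Subgroup (Equiv.Perm (ZMod 2 × B)))
    (hswap : ∀ b : B, wreathPerm (fun c => if c = b then 1 else 0) 1 ∈ G')
    (x : B → ZMod 2) : wreathPerm x 1 ∈ G' := by
  have key : ∀ (s : Finset B) (x : B → ZMod 2), (∀ b, b ∉ s → x b = 0) →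
      wreathPerm x 1 ∈ G' := by
    intro s
    induction s using Finset.induction_on with
    | empty =>
      intro x hx
      have hx0 : x = fun _ => 0 := funext fun b => hx b (Finset.notMem_empty b)
      rw [hx0, wreathPerm_one]
      exact one_mem _
    | @insert a t ha IH =>
      intro x hx
      set x' := Function.update x a 0 with hx'
      have hx'0 : ∀ b, b ∉ t → x' b = 0 := by
        intro b hb
        by_cases hba : b = a
        · rw [hba, hx', Function.update_self]
        · rw [hx', Function.update_of_ne hba]
          exact hx b (by simp [Finset.mem_insert, hba, hb])
      have h1 : wreathPerm (fun c => if c = a then x a else 0) 1 * wreathPerm x' 1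
          = wreathPerm x 1 := by
        rw [wreathPerm_mul, one_mul]
        congr 1
        funext c
        simp only [inv_one, Equiv.Perm.one_apply]
        by_cases hca : c = a
        · subst hca
          rw [if_pos rfl, hx', Function.update_self, add_zero]
        · rw [if_neg hca, hx', Function.update_of_ne hca, zero_add]
      rw [← h1]
      refine mul_mem ?_ (IH x' hx'0)
      rcases zmod2_cases (x a) with h | h
      · have h0 : (fun c => if c = a then x a else 0) = fun _ : B => (0 : ZMod 2) := by
          funext c; rw [h]; simp
        rw [h0, wreathPerm_one]
        exact one_mem _
      · simp only [h]
        exact hswap a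
  exact key Finset.univ x (fun b hb => absurd (Finset.mem_univ b) hb)

/-- A transitive permutation 2-group `G ≤ S_{2d}` contains a transposition iff it is
permutation-isomorphic to a wreath product `C₂ ≀ H` for a transitive permutation group `H` of
degree `d`. -/
theorem transitive_two_group_has_transposition_iff_wreath
    {X : Type} [Fintype X] [DecidableEq X]
    (d : ℕ) (hd : 0 < d) (hX : Fintype.card X = 2 * d)
    (G : Subgroup (Equiv.Perm X)) (hG2 : IsPGroup 2 G)
    (htrans : ∀ a b : X, ∃ g ∈ G, g a = b) :
    (∃ g ∈ G, Equiv.Perm.IsSwap g) ↔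
      ∃ (H : Subgroup (Equiv.Perm (Fin d))) (e : X ≃ ZMod 2 × Fin d),
        (∀ a b : Fin d, ∃ s ∈ H, s a = b) ∧
        (∀ g : Equiv.Perm X, g ∈ G ↔
          ∃ (x : Fin d → ZMod 2) (s : Equiv.Perm (Fin d)),
            s ∈ H ∧ e.permCongr g = wreathPerm x s) := by
  constructor
  · rintro ⟨τ, hτG, a₀, b₀, hab₀, rfl⟩
    -- every point has a unique partner
    have hex : ∀ a : X, ∃ b, b ≠ a ∧ Equiv.swap a b ∈ G := by
      intro a
      obtain ⟨g, hgG, hga⟩ := htrans a₀ a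
      refine ⟨g b₀, ?_, ?_⟩
      · intro h
        exact hab₀ (g.injective (h.trans hga.symm)).symm
      · rw [← hga, Equiv.swap_apply_apply]
        exact mul_mem (mul_mem hgG hτG) (inv_mem hgG)
    choose σ hσne hσG using hex
    have huniq : ∀ a b, b ≠ a → Equiv.swap a b ∈ G → b = σ a := fun a b h1 h2 =>
      swap_eq_of_pgroup hG2 h1 (hσne a) h2 (hσG a)
    have hσσ : ∀ a, σ (σ a) = a := by
      intro a
      refine (huniq (σ a) a (fun h => hσne a h.symm) ?_).symm
      rw [Equiv.swap_comm]
      exact hσG a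
    have hσinj : Function.Injective σ := fun a b h => by rw [← hσσ a, h, hσσ]
    have hequi : ∀ g ∈ G, ∀ a, g (σ a) = σ (g a) := by
      intro g hg a
      refine huniq (g a) (g (σ a)) (fun h => hσne a (g.injective h)) ?_
      rw [Equiv.swap_apply_apply]
      exact mul_mem (mul_mem hg (hσG a)) (inv_mem hg)
    -- representatives
    set idx := Fintype.equivFin X with hidx
    set R : Finset X := Finset.univ.filter (fun a => (idx a : ℕ) < idx (σ a)) with hR
    have hmemR : ∀ a, a ∈ R ↔ (idx a : ℕ) < idx (σ a) := by intro a; simp [hR]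
    have hRiff : ∀ a, σ a ∈ R ↔ a ∉ R := by
      intro a
      rw [hmemR, hmemR, hσσ]
      have hne : (idx (σ a) : ℕ) ≠ idx a := by
        intro h
        exact hσne a (idx.injective (Fin.ext h))
      omega
    have hcard : R.card = d := by
      have hdisj : Disjoint R (R.image σ) := by
        rw [Finset.disjoint_left]
        intro a haR haI
        obtain ⟨b, hbR, hba⟩ := Finset.mem_image.mp haI
        have hσaR : σ a ∈ R := by rw [← hba, hσσ]; exact hbR
        exact ((hRiff a).mp hσaR) haR
      have hunion : R ∪ R.image σ = Finset.univ := by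
        rw [Finset.eq_univ_iff_forall]
        intro a
        by_cases h : a ∈ R
        · exact Finset.mem_union_left _ h
        · exact Finset.mem_union_right _
            (Finset.mem_image.mpr ⟨σ a, (hRiff a).mpr h, hσσ a⟩)
      have h1 : R.card + (R.image σ).card = 2 * d := by
        rw [← Finset.card_union_of_disjoint hdisj, hunion, Finset.card_univ, hX]
      rw [Finset.card_image_of_injective _ hσinj] at h1
      omega
    let eR : {x // x ∈ R} ≃ Fin d := Finset.equivFinOfCardEq hcard
    let f : X ≃ ZMod 2 × {x // x ∈ R} := pairEquiv σ R hσσ hRiff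
    let e : X ≃ ZMod 2 × Fin d := f.trans ((Equiv.refl (ZMod 2)).prodCongr eR)
    have hflip : ∀ a, e (σ a) = ((e a).1 + 1, (e a).2) := by
      intro a
      have hf := pairEquiv_flip σ R hσσ hRiff a
      show ((Equiv.refl (ZMod 2)).prodCongr eR) (f (σ a))
        = ((((Equiv.refl (ZMod 2)).prodCongr eR) (f a)).1 + 1,
           (((Equiv.refl (ZMod 2)).prodCongr eR) (f a)).2)
      rw [show f (σ a) = ((f a).1 + 1, (f a).2) from hf]
      rfl
    set φ := permCongrHom e with hφ
    set G' := G.map φ with hG'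
    have hφmem : ∀ g : Equiv.Perm X, φ g ∈ G' ↔ g ∈ G := by
      intro g
      constructor
      · rintro ⟨g₁, hg₁, hEq⟩
        have : g₁ = g := e.permCongr.injective hEq
        exact this ▸ hg₁
      · intro hg
        exact ⟨g, hg, rfl⟩
    have hφapp : ∀ (g : Equiv.Perm X) (p : ZMod 2 × Fin d), φ g p = e (g (e.symm p)) :=
      fun g p => rfl
    have hcomm : ∀ g ∈ G, ∀ p : ZMod 2 × Fin d,
        φ g (p.1 + 1, p.2) = ((φ g p).1 + 1, (φ g p).2) := by
      intro g hg p
      have h1 : ((p.1 + 1 : ZMod 2), p.2) = e (σ (e.symm p)) := by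
        rw [hflip (e.symm p), Equiv.apply_symm_apply]
      rw [h1, hφapp, Equiv.symm_apply_apply, hequi g hg (e.symm p), hflip (g (e.symm p))]
      rw [hφapp]
    -- the block swaps lie in G'
    have hswap : ∀ b : Fin d, wreathPerm (fun c => if c = b then 1 else 0) 1 ∈ G' := by
      intro b
      have hea : e (e.symm ((0 : ZMod 2), b)) = (0, b) := Equiv.apply_symm_apply e _
      set a := e.symm ((0 : ZMod 2), b) with ha
      have heσa : e (σ a) = (1, b) := by
        rw [hflip, hea]
        norm_num
      have hkey : φ (Equiv.swap a (σ a)) = wreathPerm (fun c => if c = b then 1 else 0) 1 := by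
        apply Equiv.ext
        intro p
        obtain ⟨i, c⟩ := p
        rw [wreathPerm_apply, hφapp]
        simp only [Equiv.Perm.one_apply]
        by_cases hcb : c = b
        · subst hcb
          rcases zmod2_cases i with rfl | rfl
          · rw [← ha, Equiv.swap_apply_left, heσa]
            norm_num
          · have hv : e.symm ((1 : ZMod 2), c) = σ a := by
              rw [← heσa, Equiv.symm_apply_apply]
            rw [hv, Equiv.swap_apply_right, hea]
            have : (1 : ZMod 2) + 1 = 0 := by decide
            simp [this]
        · have h1 : e.symm (i, c) ≠ a := by
            intro h
            apply hcb
            have := congrArg e h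
            rw [Equiv.apply_symm_apply, hea] at this
            exact congrArg Prod.snd this
          have h2 : e.symm (i, c) ≠ σ a := by
            intro h
            apply hcb
            have := congrArg e h
            rw [Equiv.apply_symm_apply, heσa] at this
            exact congrArg Prod.snd this
          rw [Equiv.swap_apply_of_ne_of_ne h1 h2, Equiv.apply_symm_apply]
          simp [hcb]
      rw [← hkey]
      exact (hφmem _).mpr (hσG a)
    have hbase : ∀ x : Fin d → ZMod 2, wreathPerm x 1 ∈ G' := base_mem G' hswap
    have hstr : ∀ g ∈ G, ∃ x s, φ g = wreathPerm x s := fun g hg =>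
      exists_wreath (φ g) (hcomm g hg)
    -- the top group H
    let H : Subgroup (Equiv.Perm (Fin d)) :=
      { carrier := {s | wreathPerm (fun _ => 0) s ∈ G'}
        one_mem' := by
          show wreathPerm (fun _ => 0) 1 ∈ G'
          rw [wreathPerm_one]
          exact one_mem _
        mul_mem' := by
          intro s t hs ht
          have hs' : wreathPerm (fun _ => 0) s ∈ G' := hs
          have ht' : wreathPerm (fun _ => 0) t ∈ G' := ht
          have h2 := mul_mem hs' ht'
          rw [wreathPerm_mul] at h2
          simpa using h2
        inv_mem' := by
          intro s hs
          have hs' : wreathPerm (fun _ => 0) s ∈ G' := hs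
          have h2 := inv_mem hs'
          rw [wreathPerm_inv] at h2
          exact h2 }
    have hH : ∀ s, s ∈ H ↔ wreathPerm (fun _ => 0) s ∈ G' := fun s => Iff.rfl
    have hws : ∀ (x : Fin d → ZMod 2) (s : Equiv.Perm (Fin d)),
        wreathPerm x s ∈ G' ↔ s ∈ H := by
      intro x s
      constructor
      · intro h
        have h2 := mul_mem (hbase x) h
        rw [wreathPerm_mul, one_mul] at h2
        have h0 : (fun c => x c + x ((1 : Equiv.Perm (Fin d))⁻¹ c)) =
            fun _ : Fin d => (0 : ZMod 2) := by
          funext c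
          simp [zmod2_add_self]
        rw [h0] at h2
        exact (hH s).mpr h2
      · intro h
        have h2 := mul_mem (hbase x) ((hH s).mp h)
        rw [wreathPerm_mul, one_mul] at h2
        have h0 : (fun c => x c + (fun _ : Fin d => (0 : ZMod 2)) ((1 : Equiv.Perm (Fin d))⁻¹ c))
            = x := by
          funext c
          simp
        rwa [h0] at h2
    refine ⟨H, e, ?_, ?_⟩
    · intro b c
      obtain ⟨g, hg, hgbc⟩ := htrans (e.symm (0, b)) (e.symm (0, c))
      obtain ⟨x, s, hxs⟩ := hstr g hg
      refine ⟨s, (hws x s).mp (hxs ▸ (hφmem g).mpr hg), ?_⟩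
      have h1 : φ g ((0 : ZMod 2), b) = (0, c) := by
        rw [hφapp, hgbc, Equiv.apply_symm_apply]
      rw [hxs, wreathPerm_apply] at h1
      exact congrArg Prod.snd h1
    · intro g
      constructor
      · intro hg
        obtain ⟨x, s, hxs⟩ := hstr g hg
        exact ⟨x, s, (hws x s).mp (hxs ▸ (hφmem g).mpr hg), hxs⟩
      · rintro ⟨x, s, hsH, hEq⟩
        have : φ g ∈ G' := by
          rw [show φ g = e.permCongr g from rfl, hEq]
          exact (hws x s).mpr hsH
        exact (hφmem g).mp this
  · rintro ⟨H, e, hHtrans, hmem⟩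
    set b₀ : Fin d := ⟨0, hd⟩ with hb₀
    set u := e.symm ((0 : ZMod 2), b₀) with hu
    set v := e.symm ((1 : ZMod 2), b₀) with hv
    have heu : e u = (0, b₀) := Equiv.apply_symm_apply e _
    have hev : e v = (1, b₀) := Equiv.apply_symm_apply e _
    have huv : u ≠ v := by
      intro h
      have h2 : ((0 : ZMod 2), b₀) = ((1 : ZMod 2), b₀) := by
        rw [← heu, ← hev, h]
      have h3 : (0 : ZMod 2) = (1 : ZMod 2) := congrArg Prod.fst h2
      exact absurd h3 (by decide)
    refine ⟨Equiv.swap u v, ?_, u, v, huv, rfl⟩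
    rw [hmem]
    refine ⟨fun c => if c = b₀ then 1 else 0, 1, one_mem H, ?_⟩
    apply Equiv.ext
    intro p
    obtain ⟨i, c⟩ := p
    rw [wreathPerm_apply]
    show e (Equiv.swap u v (e.symm (i, c))) = _
    simp only [Equiv.Perm.one_apply]
    by_cases hcb : c = b₀
    · subst hcb
      rcases zmod2_cases i with rfl | rfl
      · rw [← hu, Equiv.swap_apply_left, hev]
        norm_num
      · rw [← hv, Equiv.swap_apply_right, heu]
        have h11 : (1 : ZMod 2) + 1 = 0 := by decide
        simp [h11]
    · have h1 : e.symm (i, c) ≠ u := by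
        intro h
        apply hcb
        have := congrArg e h
        rw [Equiv.apply_symm_apply, heu] at this
        exact congrArg Prod.snd this
      have h2 : e.symm (i, c) ≠ v := by
        intro h
        apply hcb
        have := congrArg e h
        rw [Equiv.apply_symm_apply, hev] at this
        exact congrArg Prod.snd this
      rw [Equiv.swap_apply_of_ne_of_ne h1 h2, Equiv.apply_symm_apply]
      simp [hcb]
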